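/- Well-definedness of next(c): for every valid, non-final, non-initial configuration c = (z, σ, t) with z even, left(c) is nonempty — in particular the unique bracket of t_G with span (0, n) belongs to left(c) — and hence next(c), the ≺-minimal element of left(c), exists. -/

import Mathlib

/-!
Formalization of the span-based Structure/Label transition parsing system of
Cross & Huang (2016), "Span-Based Constituency Parsing with a Structure-Label
System and Provably Optimal Dynamic Oracles".

A configuration is `(z, σ, t)` where `z` is the step number, `σ` the stack of
span boundaries and `t` the set of brackets built so far.  A bracket is a
triple `(X, i, j)` with `X` a nonterminal label and `i < j ≤ n` a span.
-/

namespace SpanParser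

structure Config (N : Type*) where
  z : ℕ
  σ : List ℕ
  t : Finset (N × ℕ × ℕ)

variable {N : Type*}

/-- The span of a bracket. -/
def span (b : N × ℕ × ℕ) : ℕ × ℕ := b.2

/-- Top (rightmost) boundary of the stack. -/
def topJ (σ : List ℕ) : ℕ := σ.getLastD 0

/-- Second-to-top boundary of the stack. -/
def topI (σ : List ℕ) : ℕ := σ.dropLast.getLastD 0

/-- Parser actions: shift, combine, label-`X`, and nolabel. -/
inductive Action (N : Type*) where
  | sh : Action N
  | comb : Action N
  | label : N → Action N
  | nolabel : Action N

variable [DecidableEq N]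

/-- Applicability of an action at a configuration (for sentence length `n`). -/
def App (n : ℕ) (c : Config N) : Action N → Prop
  | .sh      => Even c.z ∧ c.σ ≠ [] ∧ topJ c.σ < n
  | .comb    => Even c.z ∧ 3 ≤ c.σ.length
  | .label _ => Odd c.z ∧ 2 ≤ c.σ.length
  | .nolabel => Odd c.z ∧ 2 ≤ c.σ.length ∧ c.z < 4 * n - 1

/-- The result `τ(c)` of applying action `τ` to configuration `c`. -/
def doAct (c : Config N) : Action N → Config N
  | .sh      => ⟨c.z + 1, c.σ ++ [topJ c.σ + 1], c.t⟩
  | .comb    => ⟨c.z + 1, c.σ.dropLast.dropLast ++ [topJ c.σ], c.t⟩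
  | .label X => ⟨c.z + 1, c.σ, insert (X, topI c.σ, topJ c.σ) c.t⟩
  | .nolabel => ⟨c.z + 1, c.σ, c.t⟩

/-- The initial configuration `(0, [0], ∅)`. -/
def initial (N : Type*) : Config N := ⟨0, [0], ∅⟩

/-- One transition step `c ⊢ c'`. -/
def Step (n : ℕ) (c c' : Config N) : Prop := ∃ a, App n c a ∧ c' = doAct c a

/-- `⊢*`: reflexive-transitive closure of the transition relation. -/
def Reaches (n : ℕ) : Config N → Config N → Prop := Relation.ReflTransGen (Step n)

/-- A configuration is valid if it is reachable from the initial configuration. -/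
def Valid (n : ℕ) (c : Config N) : Prop := Reaches n (initial N) c

/-- A final configuration: `σ = [0, n]` and `z = 4n - 2`. -/
def Final (n : ℕ) (c : Config N) : Prop := c.σ = [0, n] ∧ c.z = 4 * n - 2

/-- `D(c)`: the set of trees of final configurations reachable from `c`. -/
def Dset (n : ℕ) (c : Config N) : Set (Finset (N × ℕ × ℕ)) :=
  {t' | ∃ c', Reaches n c c' ∧ Final n c' ∧ c'.t = t'}

/-- `(i,j) ⪯ (p,q)`: span `(i,j)` is encompassed by `(p,q)`, i.e. `p ≤ i < j ≤ q`. -/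
def Enc (s₁ s₂ : ℕ × ℕ) : Prop := s₂.1 ≤ s₁.1 ∧ s₁.1 < s₁.2 ∧ s₁.2 ≤ s₂.2

/-- `(i,j) ≺ (p,q)`: strict encompassment. -/
def SEnc (s₁ s₂ : ℕ × ℕ) : Prop := Enc s₁ s₂ ∧ s₁ ≠ s₂

/-- `tG` is a gold tree for sentence length `n`: valid spans, pairwise-distinct
spans, pairwise non-crossing spans, and exactly one bracket with span `(0, n)`
(uniqueness follows from distinctness of spans). -/
structure IsGold (n : ℕ) (tG : Finset (N × ℕ × ℕ)) : Prop where
  validSpans : ∀ b ∈ tG, (span b).1 < (span b).2 ∧ (span b).2 ≤ n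
  distinctSpans : ∀ b₁ ∈ tG, ∀ b₂ ∈ tG, span b₁ = span b₂ → b₁ = b₂
  noncrossing : ∀ b₁ ∈ tG, ∀ b₂ ∈ tG,
    Enc (span b₁) (span b₂) ∨ Enc (span b₂) (span b₁) ∨
    (span b₁).2 ≤ (span b₂).1 ∨ (span b₂).2 ≤ (span b₁).1
  root : ∃ X, (X, 0, n) ∈ tG

open Classical in
/-- `left(c)`: gold brackets (strictly, at even steps) encompassing the top
span whose left boundary occurs on the stack. -/
noncomputable def leftSet (tG : Finset (N × ℕ × ℕ)) (c : Config N) :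
    Finset (N × ℕ × ℕ) :=
  tG.filter fun b =>
    (if Even c.z then SEnc (topI c.σ, topJ c.σ) (span b)
     else Enc (topI c.σ, topJ c.σ) (span b)) ∧ (span b).1 ∈ c.σ

open Classical in
/-- `right(c)`: gold brackets entirely on the queue. -/
noncomputable def rightSet (tG : Finset (N × ℕ × ℕ)) (c : Config N) :
    Finset (N × ℕ × ℕ) :=
  tG.filter fun b => topJ c.σ ≤ (span b).1

open Classical in
/-- `reach(c)`: the reachable gold brackets (all of `t_G` at the initial
configuration, whose stack has fewer than two boundaries). -/
noncomputable def reach (tG : Finset (N × ℕ × ℕ)) (c : Config N) :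
    Finset (N × ℕ × ℕ) :=
  if c.σ.length < 2 then tG else leftSet tG c ∪ rightSet tG c

/-- The optimal tree `t*(c) = t ∪ reach(c)`. -/
noncomputable def tstar (tG : Finset (N × ℕ × ℕ)) (c : Config N) :
    Finset (N × ℕ × ℕ) :=
  c.t ∪ reach tG c

/-- `b = next(c)`: the `≺`-minimal element of `left(c)`. -/
def IsNext (tG : Finset (N × ℕ × ℕ)) (c : Config N) (b : N × ℕ × ℕ) : Prop :=
  b ∈ leftSet tG c ∧ ∀ b' ∈ leftSet tG c, Enc (span b) (span b')

/-- The dynamic-oracle policy `dyna(c)` as a predicate on actions. -/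
def Dyna (tG : Finset (N × ℕ × ℕ)) (c : Config N) (a : Action N) : Prop :=
  if c.σ.length < 2 then a = Action.sh
  else if Even c.z then
    ∃ b, IsNext tG c b ∧
      (((span b).1 = topI c.σ ∧ topJ c.σ < (span b).2 ∧ a = Action.sh) ∨
       ((span b).1 < topI c.σ ∧ (span b).2 = topJ c.σ ∧ a = Action.comb) ∨
       ((span b).1 < topI c.σ ∧ topJ c.σ < (span b).2 ∧
          (a = Action.sh ∨ a = Action.comb)))
  else
    (∃ X, (X, topI c.σ, topJ c.σ) ∈ tG ∧ a = Action.label X) ∨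
    ((∀ X, (X, topI c.σ, topJ c.σ) ∉ tG) ∧ a = Action.nolabel)

/-- `F1` of a predicted bracket set `t'` against the gold tree `tG`
(`0` when `t' ∩ tG = ∅`). -/
noncomputable def f1 (tG t' : Finset (N × ℕ × ℕ)) : ℝ :=
  if t' ∩ tG = ∅ then 0
  else
    (2 * (((t' ∩ tG).card : ℝ) / (tG.card : ℝ)) * (((t' ∩ tG).card : ℝ) / (t'.card : ℝ))) /
      ((((t' ∩ tG).card : ℝ) / (tG.card : ℝ)) + (((t' ∩ tG).card : ℝ) / (t'.card : ℝ)))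

/-- `F1(c)`: the best `F1` among trees reachable from `c`. -/
noncomputable def configF1 (n : ℕ) (tG : Finset (N × ℕ × ℕ)) (c : Config N) : ℝ :=
  sSup (f1 tG '' Dset n c)

/-- A run of (applicable) actions from one configuration to another. -/
inductive Run (n : ℕ) : Config N → List (Action N) → Config N → Prop
  | refl (c : Config N) : Run n c [] c
  | step {c c' : Config N} {as : List (Action N)} (a : Action N)
      (happ : App n c a) (h : Run n (doAct c a) as c') : Run n c (a :: as) c'

/-- A run all of whose actions follow the dynamic oracle. -/
inductive DynaRun (n : ℕ) (tG : Finset (N × ℕ × ℕ)) : Config N → Config N → Prop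
  | refl (c : Config N) : DynaRun n tG c c
  | step {c c' : Config N} (a : Action N) (happ : App n c a) (hdyna : Dyna tG c a)
      (h : DynaRun n tG (doAct c a) c') : DynaRun n tG c c'

def isSh : Action N → Bool
  | .sh => true
  | _ => false

def isComb : Action N → Bool
  | .comb => true
  | _ => false

/-- Label-step actions: `label-X` or `nolabel`. -/
def isLabelStep : Action N → Bool
  | .label _ => true
  | .nolabel => true
  | _ => false


/-! ### Auxiliary lemmas for `next_well_defined` -/

lemma topJ_concat (l : List ℕ) (x : ℕ) : topJ (l ++ [x]) = x := by
  simp [topJ, List.getLastD_concat]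

lemma topI_concat2 (l : List ℕ) (i j : ℕ) : topI (l ++ [i, j]) = i := by
  have h : l ++ [i, j] = (l ++ [i]) ++ [j] := by simp
  rw [topI, h, List.dropLast_concat, List.getLastD_concat]

lemma decomp2 (l : List ℕ) (h : 2 ≤ l.length) : ∃ l' i j, l = l' ++ [i, j] := by
  rcases l.eq_nil_or_concat with rfl | ⟨l1, j, rfl⟩
  · simp at h
  rcases l1.eq_nil_or_concat with rfl | ⟨l2, i, rfl⟩
  · simp at h
  exact ⟨l2, i, j, by simp⟩

lemma decomp3 (l : List ℕ) (h : 3 ≤ l.length) : ∃ l' i k j, l = l' ++ [i, k, j] := by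
  rcases l.eq_nil_or_concat with rfl | ⟨l1, j, rfl⟩
  · simp at h
  rcases l1.eq_nil_or_concat with rfl | ⟨l2, k, rfl⟩
  · simp at h
  rcases l2.eq_nil_or_concat with rfl | ⟨l3, i, rfl⟩
  · simp at h
  exact ⟨l3, i, k, j, by simp⟩

lemma head?_append_left (l l' : List ℕ) (a : ℕ) (h : l.head? = some a) :
    (l ++ l').head? = some a := by
  cases l <;> simp_all

/-- The invariant maintained by all valid configurations. -/
structure Inv (n : ℕ) (c : Config N) : Prop where
  ne : c.σ ≠ []
  head : c.σ.head? = some 0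
  chain : c.σ.Chain' (· < ·)
  le : ∀ x ∈ c.σ, x ≤ n
  zlen : c.z + 2 * c.σ.length + c.z % 2 = 4 * topJ c.σ + 2
  len2 : c = initial N ∨ 2 ≤ c.σ.length

lemma inv_step {n : ℕ} {c c' : Config N} (h : Inv n c) (hs : Step n c c') :
    Inv n c' := by
  obtain ⟨a, happ, rfl⟩ := hs
  obtain ⟨z, σ, t⟩ := c
  have hne := h.ne
  have hhead := h.head
  have hchain := h.chain
  have hle := h.le
  have hzlen := h.zlen
  simp only at hne hhead hchain hle hzlen
  rcases a with _ | _ | X | _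
  · -- sh
    obtain ⟨hev, -, hlt⟩ := happ
    simp only at hev hlt
    obtain ⟨l, j, hσ⟩ := σ.eq_nil_or_concat.resolve_left hne
    rw [List.concat_eq_append] at hσ
    subst hσ
    have htj : topJ (l ++ [j]) = j := topJ_concat l j
    have hmod : z % 2 = 0 := Nat.even_iff.mp hev
    have hσ' : (doAct ⟨z, l ++ [j], t⟩ Action.sh).σ = l ++ [j, j + 1] := by
      simp [doAct, htj]
    have htj' : topJ (l ++ [j, j + 1]) = j + 1 := by
      have : l ++ [j, j + 1] = (l ++ [j]) ++ [j + 1] := by simp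
      rw [this, topJ_concat]
    rw [htj] at hlt
    rw [htj] at hzlen
    refine ⟨by rw [hσ']; simp, ?_, ?_, ?_, ?_, ?_⟩
    · rw [hσ']
      cases l <;> simp_all
    · rw [hσ']
      have heq : l ++ [j, j + 1] = (l ++ [j]) ++ [j + 1] := by simp
      rw [heq, List.Chain', List.isChain_append]
      refine ⟨hchain, by simp, ?_⟩
      intro x hx y hy
      simp [List.getLast?_concat] at hx
      simp at hy
      omega
    · intro x hx
      rw [hσ'] at hx
      simp at hx
      have hj := hle j (by simp)
      rcases hx with hx | hx | hx
      · exact hle x (by simp [hx])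
      · omega
      · omega
    · rw [hσ', htj']
      simp only [doAct, List.length_append, List.length_cons, List.length_nil] at hzlen ⊢
      omega
    · right
      rw [hσ']
      simp
  · -- comb
    obtain ⟨hev, hlen⟩ := happ
    simp only at hev hlen
    obtain ⟨l, i, k, j, hσ⟩ := decomp3 σ hlen
    subst hσ
    have htj : topJ (l ++ [i, k, j]) = j := by
      have : l ++ [i, k, j] = (l ++ [i, k]) ++ [j] := by simp
      rw [this, topJ_concat]
    have hdd : (l ++ [i, k, j]).dropLast.dropLast = l ++ [i] := by
      have h1 : l ++ [i, k, j] = (l ++ [i, k]) ++ [j] := by simp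
      have h2 : l ++ [i, k] = (l ++ [i]) ++ [k] := by simp
      rw [h1, List.dropLast_concat, h2, List.dropLast_concat]
    have hσ' : (doAct ⟨z, l ++ [i, k, j], t⟩ Action.comb).σ = l ++ [i, j] := by
      simp only [doAct, hdd, htj]
      simp
    have htj' : topJ (l ++ [i, j]) = j := by
      have : l ++ [i, j] = (l ++ [i]) ++ [j] := by simp
      rw [this, topJ_concat]
    rw [List.Chain', List.isChain_append] at hchain
    obtain ⟨hcl, hc3, hlast⟩ := hchain
    have hik : i < k ∧ k < j := by simpa using hc3
    have hmod : z % 2 = 0 := Nat.even_iff.mp hev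
    rw [htj] at hzlen
    refine ⟨by rw [hσ']; simp, ?_, ?_, ?_, ?_, ?_⟩
    · rw [hσ']
      cases l <;> simp_all
    · rw [hσ', List.Chain', List.isChain_append]
      refine ⟨hcl, by simp; omega, ?_⟩
      intro x hx y hy
      have := hlast x hx i (by simp)
      simp at hy
      rcases hy with rfl | rfl <;> omega
    · intro x hx
      rw [hσ'] at hx
      apply hle
      simp at hx ⊢
      rcases hx with hx | rfl | rfl <;> tauto
    · rw [hσ', htj']
      simp only [doAct, List.length_append, List.length_cons, List.length_nil] at hzlen ⊢
      omega
    · right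
      rw [hσ']
      simp
  · -- label
    obtain ⟨hodd, hlen⟩ := happ
    simp only at hodd hlen
    have hmod : z % 2 = 1 := Nat.odd_iff.mp hodd
    exact ⟨hne, hhead, hchain, hle, by simp only [doAct] at *; omega, Or.inr hlen⟩
  · -- nolabel
    obtain ⟨hodd, hlen, -⟩ := happ
    simp only at hodd hlen
    have hmod : z % 2 = 1 := Nat.odd_iff.mp hodd
    exact ⟨hne, hhead, hchain, hle, by simp only [doAct] at *; omega, Or.inr hlen⟩

lemma inv_of_valid {n : ℕ} {c : Config N} (hc : Valid n c) : Inv n c := by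
  induction hc with
  | refl =>
    refine ⟨by simp [initial], by simp [initial], by simp [initial, List.Chain'],
      by simp [initial], by simp [initial, topJ], Or.inl rfl⟩
  | tail _ hstep ih => exact inv_step ih hstep

/-- Well-definedness of `next(c)`: at every valid, non-final, non-initial
even-step configuration, `left(c)` is nonempty — in particular any gold
bracket with span `(0, n)` belongs to `left(c)` — and hence the `≺`-minimal
element `next(c)` of `left(c)` exists. -/
theorem next_well_defined (n : ℕ) (hn : 1 ≤ n) (tG : Finset (N × ℕ × ℕ))
    (hG : IsGold n tG) (c : Config N) (hc : Valid n c) (hnf : ¬ Final n c)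
    (hni : c ≠ initial N) (hz : Even c.z) :
    (∀ X : N, (X, 0, n) ∈ tG → (X, 0, n) ∈ leftSet tG c) ∧
      ∃ b, IsNext tG c b := by
  classical
  have hInv := inv_of_valid hc
  have hlen : 2 ≤ c.σ.length := hInv.len2.resolve_left hni
  obtain ⟨l, i, j, hσ⟩ := decomp2 c.σ hlen
  have hti : topI c.σ = i := by rw [hσ, topI_concat2]
  have htj : topJ c.σ = j := by
    rw [hσ]
    have : l ++ [i, j] = (l ++ [i]) ++ [j] := by simp
    rw [this, topJ_concat]
  have hij : i < j := by
    have := hInv.chain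
    rw [hσ, List.Chain', List.isChain_append] at this
    simpa using this.2.1
  have hjn : j ≤ n := hInv.le j (by rw [hσ]; simp)
  have h0σ : (0 : ℕ) ∈ c.σ := List.mem_of_mem_head? (by rw [hInv.head]; rfl)
  -- the top span is not (0, n)
  have hne0n : (i, j) ≠ ((0 : ℕ), n) := by
    intro hEq
    rw [Prod.mk.injEq] at hEq
    obtain ⟨rfl, rfl⟩ := hEq
    have hlnil : l = [] := by
      rcases l.eq_nil_or_concat with rfl | ⟨l2, x, rfl⟩
      · rfl
      · have := hInv.chain
        rw [hσ, List.Chain', List.isChain_append] at this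
        have := this.2.2 x (by simp [List.getLast?_concat]) 0 (by simp)
        omega
    subst hlnil
    have hz2 := hInv.zlen
    rw [htj, Nat.even_iff.mp hz] at hz2
    rw [hσ] at hz2
    simp only [List.length_append, List.length_cons, List.length_nil,
      List.nil_append] at hz2
    exact hnf ⟨by rw [hσ]; rfl, by omega⟩
  have hinj : i ≠ 0 ∨ j ≠ n := by
    by_contra hcon
    push_neg at hcon
    exact hne0n (by rw [hcon.1, hcon.2])
  -- part 1 : root brackets belong to leftSet
  have part1 : ∀ X : N, (X, 0, n) ∈ tG → (X, 0, n) ∈ leftSet tG c := by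
    intro X hX
    rw [leftSet, Finset.mem_filter]
    refine ⟨hX, ?_, by simpa [span] using h0σ⟩
    rw [if_pos hz]
    refine ⟨⟨by simp [hti, span], by simp [hti, htj, span]; omega,
      by simp [htj, span]; omega⟩, ?_⟩
    simp only [span, hti, htj]
    intro hEq
    exact hne0n (by simpa using hEq)
  refine ⟨part1, ?_⟩
  -- part 2 : existence of a ≺-minimal bracket
  obtain ⟨X, hX⟩ := hG.root
  have hnonempty : (leftSet tG c).Nonempty := ⟨_, part1 X hX⟩
  obtain ⟨b, hb, hmin⟩ :=
    Finset.exists_min_image (leftSet tG c)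
      (fun b => (span b).2 - (span b).1) hnonempty
  refine ⟨b, hb, ?_⟩
  intro b' hb'
  have hmem : ∀ {a : N × ℕ × ℕ}, a ∈ leftSet tG c →
      a ∈ tG ∧ (span a).1 ≤ i ∧ i < j ∧ j ≤ (span a).2 := by
    intro a ha
    rw [leftSet, Finset.mem_filter] at ha
    obtain ⟨haG, hcond, _⟩ := ha
    rw [if_pos hz] at hcond
    obtain ⟨⟨h1, h2, h3⟩, _⟩ := hcond
    rw [hti, htj] at h1 h2 h3
    exact ⟨haG, h1, h2, h3⟩
  obtain ⟨hbG, hb1, _, hb2⟩ := hmem hb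
  obtain ⟨hb'G, hb'1, _, hb'2⟩ := hmem hb'
  have hlenmin := hmin b' hb'
  have hcross := hG.noncrossing b hbG b' hb'G
  simp only [Enc] at hcross ⊢
  rcases hcross with h | h | h | h
  · exact h
  · -- Enc (span b') (span b): equal by minimality
    obtain ⟨e1, e2, e3⟩ := h
    refine ⟨by omega, by omega, by omega⟩
  · omega
  · omega

end SpanParser
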